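/- For any point set P = {x_1,...,x_N} ⊆ [0,1)^d, the squared periodic L₂-discrepancy satisfies L_{2,N}^per(P)² ≥ -1/3^d + 1/(N·2^d). -/

import Mathlib

/-- The second Bernoulli polynomial `B₂(x) = x² - x + 1/6`. -/
noncomputable def bern2 (x : ℝ) : ℝ := x^2 - x + 1/6

lemma bern2_key (x : ℝ) : (0:ℝ) ≤ 1/3 + bern2 x := by
  have : 1/3 + bern2 x = (x - 1/2)^2 + 1/4 := by unfold bern2; ring
  nlinarith [sq_nonneg (x - 1/2)]

/-- For any `N`-point set `P ⊆ [0,1)^d`, the squared periodic `L₂`-discrepancy (in its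
Bernoulli-polynomial form) is at least `-1/3^d + 1/(N·2^d)`. -/
theorem periodicL2sq_lower (d N : ℕ) (hN : 1 ≤ N) (X : Fin N → Fin d → ℝ)
    (hX : ∀ n j, X n j ∈ Set.Ico (0:ℝ) 1) :
    -(1/3^d) + (1/(N:ℝ)^2) * ∑ n : Fin N, ∑ m : Fin N,
        ∏ j : Fin d, (1/3 + bern2 |X n j - X m j|)
      ≥ -(1/3^d) + 1/((N:ℝ) * 2^d) := by
  have hNpos : (0:ℝ) < N := by exact_mod_cast hN
  have hdiag : ∀ n : Fin N, ∏ j : Fin d, (1/3 + bern2 |X n j - X n j|) = (1/2)^d := by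
    intro n
    have : ∀ j : Fin d, (1/3 + bern2 |X n j - X n j|) = 1/2 := by
      intro j; simp [bern2]; norm_num
    rw [Finset.prod_congr rfl fun j _ => this j, Finset.prod_const]
    simp
  have hsum : (N:ℝ) * (1/2)^d ≤ ∑ n : Fin N, ∑ m : Fin N,
      ∏ j : Fin d, (1/3 + bern2 |X n j - X m j|) := by
    calc (N:ℝ) * (1/2)^d = ∑ n : Fin N, ∏ j : Fin d, (1/3 + bern2 |X n j - X n j|) := by
          rw [Finset.sum_congr rfl fun n _ => hdiag n]; simp [mul_comm]
      _ ≤ _ := by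
          apply Finset.sum_le_sum
          intro n _
          apply Finset.single_le_sum (f := fun m => ∏ j : Fin d, (1/3 + bern2 |X n j - X m j|))
            (fun m _ => Finset.prod_nonneg fun j _ => bern2_key _) (Finset.mem_univ n)
  have key : 1/((N:ℝ) * 2^d) ≤ (1/(N:ℝ)^2) * ∑ n : Fin N, ∑ m : Fin N,
      ∏ j : Fin d, (1/3 + bern2 |X n j - X m j|) := by
    have heq : 1/((N:ℝ) * 2^d) = ((N:ℝ) * (1/2)^d) * (1/(N:ℝ)^2) := by
      field_simp; ring_nf; rw [← mul_pow]; norm_num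
    rw [heq, mul_comm ((1:ℝ)/(N:ℝ)^2)]
    exact mul_le_mul_of_nonneg_right hsum (by positivity)
  linarith
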